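/- Let M be a monoid map Q → P of integral monoids giving a chart of an exact closed immersion of log schemes, where P = (N × ∏Z) × ∏(∏Z/Z) is as in the smooth-case construction. Then for any two choices λ₀, λ₀' of distinguished index, there is a canonical isomorphism P_{λ₀} ≅ P_{λ₀'} of monoids over Q, compatible with the maps to R/p. -/

import Mathlib

/-!
STATEMENT 18. (Charts `P_{l0}` in the smooth case.)  For two choices `l0, l1` of
distinguished index, there is a canonical isomorphism `P_{l0} ≅ P_{l1}` of monoids
over `Q`, compatible with the maps to `R/p`, where
`P_{l0} = (ℕ × ∏_{0≤i≤r_{l0}, i≠i_{l0}} ℤ) × ∏_{λ≠l0} ((∏_{0≤i≤r_λ} ℤ)/ℤ)`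
(with `ℤ` embedded diagonally in each quotient).

Following the context we work purely with the monoids: the map `P_{l0} → R/p` sends
the `ℕ`-component to powers of `p^q` and the `ℤ`-components to powers of the units
`v_{λ,i}` satisfying `∏_i v_{λ,i} = 1` (which makes the quotient by the diagonal
well defined).  The conclusion exhibits an additive monoid isomorphism
`P_{l0} ≃+ P_{l1}` commuting with these maps to (the multiplicative monoid of) `R/p`.
-/

/-- The diagonal copy of `ℤ` in `Fin n → ℤ`. -/
def diagSub (n : ℕ) : AddSubgroup (Fin n → ℤ) :=
  AddSubgroup.zmultiples (fun _ => (1 : ℤ))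

/-- `(∏_{0≤i<n} ℤ)/ℤ`, the quotient by the diagonal. -/
abbrev GqT (n : ℕ) := (Fin n → ℤ) ⧸ diagSub n

/-- The monoid `P_{l0}` of the smooth-case chart construction. -/
abbrev PMon {Λ : Type*} [DecidableEq Λ] (r : Λ → ℕ)
    (idx : (l : Λ) → Fin (r l + 1)) (l0 : Λ) : Type _ :=
  ℕ × ({i : Fin (r l0 + 1) // i ≠ idx l0} → ℤ) ×
    ((l : {l : Λ // l ≠ l0}) → GqT (r l.1 + 1))

/-- The map `(∏ ℤ)/ℤ → Tˣ`, `w ↦ ∏ᵢ vᵢ^{wᵢ}`, well defined since `∏ᵢ vᵢ = 1`. -/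
noncomputable def vProd {T : Type*} [CommMonoid T] (n : ℕ) (v : Fin n → Tˣ)
    (hv : ∏ i, v i = 1) : GqT n →+ Additive Tˣ :=
  QuotientAddGroup.lift (diagSub n)
    (AddMonoidHom.mk' (fun w => Additive.ofMul (∏ i, v i ^ (w i))) (by
      intro w w'
      simp [Pi.add_apply, zpow_add, Finset.prod_mul_distrib]))
    (by
      intro x hx
      obtain ⟨k, rfl⟩ := AddSubgroup.mem_zmultiples_iff.mp hx
      show Additive.ofMul (∏ i, v i ^ ((k • fun _ => (1 : ℤ)) i)) = 0
      have h1 : (∏ i, v i ^ ((k • fun _ => (1 : ℤ)) i)) = (∏ i, v i) ^ k := by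
        rw [← Finset.prod_zpow]
        exact Finset.prod_congr rfl (fun i _ => by simp)
      rw [h1, hv, one_zpow]
      rfl)

/-- The augmentation map `P_{l0} → R/p` (multiplicatively valued in `T`). -/
noncomputable def psiFun {Λ : Type*} [Fintype Λ] [DecidableEq Λ] (r : Λ → ℕ)
    (idx : (l : Λ) → Fin (r l + 1)) {T : Type*} [CommMonoid T] (pq : T)
    (v : (l : Λ) → Fin (r l + 1) → Tˣ) (hv : ∀ l, ∏ i, v l i = 1) (l0 : Λ)
    (z : PMon r idx l0) : T :=
  pq ^ z.1 *
    (∏ i : {i : Fin (r l0 + 1) // i ≠ idx l0}, ((v l0 i.1 ^ (z.2.1 i) : Tˣ) : T)) *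
    ∏ l : {l : Λ // l ≠ l0},
      ((Additive.toMul (vProd (r l.1 + 1) (v l.1) (hv l.1) (z.2.2 l)) : Tˣ) : T)

/-- extend by 0 at j -/
def extj {n : ℕ} (j : Fin n) (a : {i : Fin n // i ≠ j} → ℤ) : Fin n → ℤ :=
  fun i => if h : i = j then 0 else a ⟨i, h⟩

lemma extj_add {n : ℕ} (j : Fin n) (a b : {i : Fin n // i ≠ j} → ℤ) :
    extj j (a + b) = extj j a + extj j b := by
  funext i; by_cases h : i = j <;> simp [extj, h]

def phi {n : ℕ} (j : Fin n) : ({i : Fin n // i ≠ j} → ℤ) ≃+ GqT n where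
  toFun a := QuotientAddGroup.mk (extj j a)
  invFun := QuotientAddGroup.lift (diagSub n)
    (AddMonoidHom.mk' (fun w i => w i.1 - w j) (by intro w w'; funext i; simp; ring))
    (by
      intro x hx
      obtain ⟨k, rfl⟩ := AddSubgroup.mem_zmultiples_iff.mp hx
      funext i; simp)
  left_inv a := by
    funext i
    simp [QuotientAddGroup.lift_mk, extj, i.2]
  right_inv := by
    intro w
    induction w using QuotientAddGroup.induction_on with
    | _ w =>
      simp only [QuotientAddGroup.lift_mk, AddMonoidHom.mk'_apply]
      rw [QuotientAddGroup.eq]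
      refine AddSubgroup.mem_zmultiples_iff.mpr ⟨w j, ?_⟩
      funext i
      by_cases h : i = j <;> simp [extj, h] 
  map_add' a b := by
    show QuotientAddGroup.mk (extj j (a + b)) = _
    rw [extj_add]
    rfl

lemma vProd_phi {T : Type*} [CommMonoid T] {n : ℕ} (v : Fin n → Tˣ)
    (hv : ∏ i, v i = 1) (j : Fin n) (a : {i : Fin n // i ≠ j} → ℤ) :
    Additive.toMul (vProd n v hv (phi j a)) =
      ∏ i : {i : Fin n // i ≠ j}, v i.1 ^ a i := by
  show Additive.toMul (Additive.ofMul (∏ i, v i ^ (extj j a i))) = _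
  rw [toMul_ofMul]
  rw [← Finset.mul_prod_erase Finset.univ _ (Finset.mem_univ j)]
  have h0 : extj j a j = 0 := by simp [extj]
  rw [h0, zpow_zero, one_mul]
  rw [Finset.prod_subtype (Finset.univ.erase j)
    (p := fun i => i ≠ j) (by simp) (fun i => v i ^ extj j a i)]
  refine Finset.prod_congr rfl fun i _ => ?_
  simp [extj, i.2]

abbrev Can {Λ : Type*} (r : Λ → ℕ) := ℕ × ((l : Λ) → GqT (r l + 1))

def Emap {Λ : Type*} [DecidableEq Λ] (r : Λ → ℕ)
    (idx : (l : Λ) → Fin (r l + 1)) (l0 : Λ) :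
    PMon r idx l0 ≃+ Can r where
  toFun z := (z.1, fun l =>
    if h : l = l0 then cast (by rw [h]) (phi (idx l0) z.2.1) else z.2.2 ⟨l, h⟩)
  invFun z := (z.1, (phi (idx l0)).symm (z.2 l0), fun l => z.2 l.1)
  left_inv z := by
    refine Prod.ext rfl (Prod.ext ?_ ?_)
    · show (phi (idx l0)).symm (if h : l0 = l0 then _ else _) = z.2.1
      rw [dif_pos rfl, cast_eq]
      exact (phi (idx l0)).symm_apply_apply _
    · funext l
      show (if h : l.1 = l0 then _ else z.2.2 ⟨l.1, h⟩) = z.2.2 l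
      rw [dif_neg l.2]
  right_inv z := by
    refine Prod.ext rfl ?_
    funext l
    by_cases h : l = l0
    · subst h
      show (if h : l = l then cast _ (phi (idx l) ((phi (idx l)).symm (z.2 l))) else _) = z.2 l
      rw [dif_pos rfl, cast_eq]
      exact (phi (idx l)).apply_symm_apply _
    · exact dif_neg h
  map_add' z w := by
    refine Prod.ext rfl ?_
    funext l
    show (if h : l = l0 then _ else _) = ((if h : l = l0 then _ else _ : GqT (r l + 1)) + (if h : l = l0 then _ else _ : GqT (r l + 1)))
    by_cases h : l = l0
    · subst h
      rw [dif_pos rfl, dif_pos rfl, dif_pos rfl, cast_eq, cast_eq, cast_eq]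
      exact map_add (phi (idx l)).toAddMonoidHom _ _
    · rw [dif_neg h, dif_neg h, dif_neg h]
      rfl

noncomputable def PsiCan {Λ : Type*} [Fintype Λ] (r : Λ → ℕ) {T : Type*} [CommMonoid T]
    (pq : T) (v : (l : Λ) → Fin (r l + 1) → Tˣ) (hv : ∀ l, ∏ i, v l i = 1)
    (z : Can r) : T :=
  pq ^ z.1 * ∏ l, ((Additive.toMul (vProd (r l + 1) (v l) (hv l) (z.2 l)) : Tˣ) : T)

lemma PsiCan_Emap {Λ : Type*} [Fintype Λ] [DecidableEq Λ] (r : Λ → ℕ)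
    (idx : (l : Λ) → Fin (r l + 1)) {T : Type*} [CommMonoid T] (pq : T)
    (v : (l : Λ) → Fin (r l + 1) → Tˣ) (hv : ∀ l, ∏ i, v l i = 1) (l0 : Λ)
    (z : PMon r idx l0) :
    PsiCan r pq v hv (Emap r idx l0 z) = psiFun r idx pq v hv l0 z := by
  unfold PsiCan psiFun
  have h2 : ((Emap r idx l0 z).2 : (l : Λ) → GqT (r l + 1)) =
      fun l => if h : l = l0 then cast (by rw [h]) (phi (idx l0) z.2.1) else z.2.2 ⟨l, h⟩ := rfl
  rw [h2]
  rw [← Finset.mul_prod_erase Finset.univ _ (Finset.mem_univ l0)]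
  have hl0 : ((Additive.toMul (vProd (r l0 + 1) (v l0) (hv l0)
      (if h : l0 = l0 then cast (by rw [h]) (phi (idx l0) z.2.1) else z.2.2 ⟨l0, h⟩)) : Tˣ) : T)
      = ∏ i : {i : Fin (r l0 + 1) // i ≠ idx l0}, ((v l0 i.1 ^ (z.2.1 i) : Tˣ) : T) := by
    rw [dif_pos rfl, cast_eq, vProd_phi]
    exact map_prod (Units.coeHom T) _ _
  rw [hl0]
  have hrest : (∏ l ∈ Finset.univ.erase l0, ((Additive.toMul (vProd (r l + 1) (v l) (hv l)
      (if h : l = l0 then cast (by rw [h]) (phi (idx l0) z.2.1) else z.2.2 ⟨l, h⟩)) : Tˣ) : T))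
      = ∏ l : {l : Λ // l ≠ l0},
        ((Additive.toMul (vProd (r l.1 + 1) (v l.1) (hv l.1) (z.2.2 l)) : Tˣ) : T) := by
    rw [Finset.prod_subtype (Finset.univ.erase l0) (p := fun l => l ≠ l0) (by simp)]
    refine Finset.prod_congr rfl fun l _ => ?_
    rw [dif_neg l.2]
  rw [hrest]
  show pq ^ z.1 * (_ * _) = pq ^ z.1 * _ * _
  rw [mul_assoc]

theorem chart_monoids_canonically_isomorphic
    {Λ : Type*} [Fintype Λ] [DecidableEq Λ] (r : Λ → ℕ)
    (idx : (l : Λ) → Fin (r l + 1))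
    {T : Type*} [CommMonoid T] (pq : T)
    (v : (l : Λ) → Fin (r l + 1) → Tˣ) (hv : ∀ l, ∏ i, v l i = 1)
    (l0 l1 : Λ) :
    ∃ e : PMon r idx l0 ≃+ PMon r idx l1,
      ∀ z : PMon r idx l0,
        psiFun r idx pq v hv l1 (e z) = psiFun r idx pq v hv l0 z := by
  refine ⟨(Emap r idx l0).trans (Emap r idx l1).symm, fun z => ?_⟩
  rw [← PsiCan_Emap r idx pq v hv l1, ← PsiCan_Emap r idx pq v hv l0]
  show PsiCan r pq v hv (Emap r idx l1 ((Emap r idx l1).symm (Emap r idx l0 z))) = _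
  rw [(Emap r idx l1).apply_symm_apply]
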